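/- Let (Φ_{n,k}) be the orthonormal family above and E_f the closure in L²(0,1) of {f·φ : φ ∈ L²(0,1)}. If the dyadic mesh satisfies sup_k |r_{n,k} − l_{n,k}| → 0, then the closed linear span of {Φ_{n,k}} equals the closure of E_f, i.e., (Φ_{n,k}) is a Hilbert basis of the closure of E_f. -/

import Mathlib

open MeasureTheory intervalIntegral
open scoped ENNReal NNReal

/-- `h(t) = ∫₀ᵗ f(u)² du`. -/
noncomputable def hFun (f : ℝ → ℝ) (t : ℝ) : ℝ := ∫ u in (0:ℝ)..t, (f u) ^ 2

/-- Left endpoint `l_{n,k} = 2k·2⁻ⁿ` of the dyadic support `S_{n,k}`. -/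
noncomputable def lPt (n k : ℕ) : ℝ := (2 * k : ℝ) / 2 ^ n

/-- Midpoint `m_{n,k} = (2k+1)·2⁻ⁿ`. -/
noncomputable def mPt (n k : ℕ) : ℝ := (2 * k + 1 : ℝ) / 2 ^ n

/-- Right endpoint `r_{n,k} = 2(k+1)·2⁻ⁿ`. -/
noncomputable def rPt (n k : ℕ) : ℝ := (2 * k + 2 : ℝ) / 2 ^ n

/-- `L_{n,k} = √((h r − h m)/((h r − h l)(h m − h l)))`. -/
noncomputable def Lcoef (f : ℝ → ℝ) (n k : ℕ) : ℝ :=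
  Real.sqrt ((hFun f (rPt n k) - hFun f (mPt n k)) /
    ((hFun f (rPt n k) - hFun f (lPt n k)) * (hFun f (mPt n k) - hFun f (lPt n k))))

/-- `R_{n,k} = √((h m − h l)/((h r − h l)(h r − h m)))`. -/
noncomputable def Rcoef (f : ℝ → ℝ) (n k : ℕ) : ℝ :=
  Real.sqrt ((hFun f (mPt n k) - hFun f (lPt n k)) /
    ((hFun f (rPt n k) - hFun f (lPt n k)) * (hFun f (rPt n k) - hFun f (mPt n k))))

/-- The auxiliary Haar-like family `Φ_{n,k}`: `Φ_{0,0} = f/√(h 1 − h 0)` and, for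
`n > 0`, `L_{n,k}·f` on `[l,m)`, `−R_{n,k}·f` on `[m,r)`, `0` elsewhere. -/
noncomputable def Phi (f : ℝ → ℝ) (n k : ℕ) (t : ℝ) : ℝ :=
  if n = 0 then f t / Real.sqrt (hFun f 1 - hFun f 0)
  else if lPt n k ≤ t ∧ t < mPt n k then Lcoef f n k * f t
  else if mPt n k ≤ t ∧ t < rPt n k then -(Rcoef f n k * f t)
  else 0

lemma hFun_diff {f : ℝ → ℝ} (hf : Continuous f) (a b : ℝ) :
    hFun f b - hFun f a = ∫ u in a..b, (f u) ^ 2 := by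
  have h1 : IntervalIntegrable (fun u => (f u)^2) volume 0 a :=
    ((hf.pow 2)).intervalIntegrable _ _
  have h2 : IntervalIntegrable (fun u => (f u)^2) volume a b :=
    ((hf.pow 2)).intervalIntegrable _ _
  have := intervalIntegral.integral_add_adjacent_intervals h1 h2
  unfold hFun
  linarith [this]

lemma hFun_pos {f : ℝ → ℝ} (hf : Continuous f)
    (hzero : MeasureTheory.volume {t : ℝ | t ∈ Set.Ioc (0:ℝ) 1 ∧ f t = 0} = 0)
    {a b : ℝ} (h0 : 0 ≤ a) (hab : a < b) (hb1 : b ≤ 1) :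
    0 < hFun f b - hFun f a := by
  rw [hFun_diff hf]
  rw [intervalIntegral.integral_pos_iff_support_of_nonneg_ae'
    (Filter.Eventually.of_forall fun u => sq_nonneg _)
    ((hf.pow 2).intervalIntegrable _ _)]
  refine ⟨hab, ?_⟩
  rw [pos_iff_ne_zero]
  intro hnull
  have hsub : Set.Ioc a b \ Function.support (fun u => (f u)^2) ⊆
      {t : ℝ | t ∈ Set.Ioc (0:ℝ) 1 ∧ f t = 0} := by
    rintro t ⟨ht, hts⟩
    simp only [Function.mem_support, not_not] at hts
    exact ⟨⟨lt_of_le_of_lt h0 ht.1, ht.2.trans hb1⟩, pow_eq_zero_iff two_ne_zero |>.mp hts⟩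
  have h2 : volume (Set.Ioc a b \ Function.support (fun u => (f u)^2)) = 0 :=
    measure_mono_null hsub hzero
  have h3 : volume (Set.Ioc a b) ≤ 0 := by
    calc volume (Set.Ioc a b)
        ≤ volume ((Function.support (fun u => (f u)^2) ∩ Set.Ioc a b) ∪
            (Set.Ioc a b \ Function.support (fun u => (f u)^2))) :=
          measure_mono (fun t ht => by
            by_cases h : t ∈ Function.support (fun u => (f u)^2)
            · exact Or.inl ⟨h, ht⟩
            · exact Or.inr ⟨ht, h⟩)
      _ ≤ _ := measure_union_le _ _
      _ = 0 := by rw [hnull, h2, add_zero]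
  rw [Real.volume_Ioc] at h3
  simp only [nonpos_iff_eq_zero, ENNReal.ofReal_eq_zero] at h3
  linarith

lemma pts_basic (n k : ℕ) (hk : k < 2 ^ n) :
    0 ≤ lPt (n+1) k ∧ lPt (n+1) k < mPt (n+1) k ∧ mPt (n+1) k < rPt (n+1) k ∧
      rPt (n+1) k ≤ 1 := by
  have h2 : (0:ℝ) < 2 ^ (n+1) := by positivity
  have hk' : (2*k+2 : ℝ) ≤ 2 ^ (n+1) := by
    have : (k:ℝ) + 1 ≤ 2 ^ n := by exact_mod_cast Nat.succ_le_of_lt hk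
    rw [pow_succ]; linarith
  refine ⟨?_, ?_, ?_, ?_⟩
  · unfold lPt; positivity
  · exact div_lt_div_of_pos_right (by linarith) h2
  · exact div_lt_div_of_pos_right (by linarith) h2
  · exact (div_le_one h2).mpr hk'

lemma Lcoef_pos {f : ℝ → ℝ} (hf : Continuous f)
    (hzero : MeasureTheory.volume {t : ℝ | t ∈ Set.Ioc (0:ℝ) 1 ∧ f t = 0} = 0)
    (n k : ℕ) (hk : k < 2 ^ n) : 0 < Lcoef f (n+1) k := by
  obtain ⟨h0, hlm, hmr, hr1⟩ := pts_basic n k hk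
  have h1 := hFun_pos hf hzero h0 hlm (by linarith)
  have h2 := hFun_pos hf hzero (by linarith) hmr hr1
  have h3 := hFun_pos hf hzero h0 (hlm.trans hmr) hr1
  exact Real.sqrt_pos.mpr (div_pos h2 (mul_pos h3 h1))

lemma Rcoef_pos {f : ℝ → ℝ} (hf : Continuous f)
    (hzero : MeasureTheory.volume {t : ℝ | t ∈ Set.Ioc (0:ℝ) 1 ∧ f t = 0} = 0)
    (n k : ℕ) (hk : k < 2 ^ n) : 0 < Rcoef f (n+1) k := by
  obtain ⟨h0, hlm, hmr, hr1⟩ := pts_basic n k hk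
  have h1 := hFun_pos hf hzero h0 hlm (by linarith)
  have h2 := hFun_pos hf hzero (by linarith) hmr hr1
  have h3 := hFun_pos hf hzero h0 (hlm.trans hmr) hr1
  exact Real.sqrt_pos.mpr (div_pos h1 (mul_pos h3 h2))

lemma dyadic_mem {f : ℝ → ℝ} (hf : Continuous f)
    (hzero : MeasureTheory.volume {t : ℝ | t ∈ Set.Ioc (0:ℝ) 1 ∧ f t = 0} = 0)
    (hPhiMem : ∀ n k : ℕ,
      MemLp (Phi f n k) 2 (MeasureTheory.volume.restrict (Set.Ioc (0:ℝ) 1))) :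
    ∀ n : ℕ, ∀ j : ℕ, j < 2 ^ n →
    ∃ x ∈ Submodule.span ℝ
        {x : Lp ℝ 2 (MeasureTheory.volume.restrict (Set.Ioc (0:ℝ) 1)) |
          ∃ n k : ℕ, k < 2 ^ (n - 1) ∧ x = (hPhiMem n k).toLp (Phi f n k)},
      (x : ℝ → ℝ) =ᵐ[MeasureTheory.volume.restrict (Set.Ioc (0:ℝ) 1)]
        fun t => f t * (if (j:ℝ)/2^n ≤ t ∧ t < ((j:ℝ)+1)/2^n then 1 else 0) := by
  set μ := MeasureTheory.volume.restrict (Set.Ioc (0:ℝ) 1) with hμ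
  have hone : μ {(1:ℝ)} = 0 := by
    rw [hμ, Measure.restrict_apply (measurableSet_singleton 1)]
    exact measure_mono_null Set.inter_subset_left Real.volume_singleton
  intro n
  induction n with
  | zero =>
    intro j hj
    interval_cases j
    have hc : 0 < hFun f 1 - hFun f 0 := hFun_pos hf hzero le_rfl one_pos le_rfl
    have hsc : Real.sqrt (hFun f 1 - hFun f 0) ≠ 0 := by
      positivity
    refine ⟨Real.sqrt (hFun f 1 - hFun f 0) • (hPhiMem 0 0).toLp (Phi f 0 0),
      Submodule.smul_mem _ _ (Submodule.subset_span ⟨0, 0, by norm_num, rfl⟩), ?_⟩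
    filter_upwards [Lp.coeFn_smul (Real.sqrt (hFun f 1 - hFun f 0))
        ((hPhiMem 0 0).toLp (Phi f 0 0)),
      (hPhiMem 0 0).coeFn_toLp,
      ae_restrict_mem measurableSet_Ioc,
      measure_eq_zero_iff_ae_notMem.mp hone] with t h1 h2 ht hne
    have ht1 : t < 1 := lt_of_le_of_ne ht.2 (by simpa using hne)
    rw [h1]
    simp only [Pi.smul_apply, h2, smul_eq_mul, Phi, if_pos rfl, ↓reduceIte]
    have hcond : ((0:ℕ):ℝ)/2^0 ≤ t ∧ t < (((0:ℕ):ℝ)+1)/2^0 := by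
      norm_num
      exact ⟨ht.1.le, ht1⟩
    rw [if_pos hcond, mul_one]
    field_simp
  | succ n ih =>
    intro j hj
    have hpow : 2 ^ (n+1) = 2 ^ n * 2 := pow_succ 2 n
    set k := j / 2 with hkdef
    have hk2 : k < 2 ^ n := by omega
    have hpar : j = 2*k ∨ j = 2*k+1 := by omega
    obtain ⟨h0, hlm, hmr, hr1⟩ := pts_basic n k hk2
    have hXX := Lcoef_pos hf hzero n k hk2
    have hR := Rcoef_pos hf hzero n k hk2
    have hLR : Lcoef f (n+1) k + Rcoef f (n+1) k ≠ 0 := by positivity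
    obtain ⟨x, hxSp, hx⟩ := ih k hk2
    have e1 : ((k:ℝ))/2^n = lPt (n+1) k := by
      unfold lPt; rw [pow_succ]; field_simp
    have e2 : ((k:ℝ)+1)/2^n = rPt (n+1) k := by
      unfold rPt; rw [pow_succ]; field_simp
    rw [e1, e2] at hx
    have hΦmem : (hPhiMem (n+1) k).toLp (Phi f (n+1) k) ∈ Submodule.span ℝ
        {x : Lp ℝ 2 (MeasureTheory.volume.restrict (Set.Ioc (0:ℝ) 1)) |
          ∃ n k : ℕ, k < 2 ^ (n - 1) ∧ x = (hPhiMem n k).toLp (Phi f n k)} :=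
      Submodule.subset_span ⟨n+1, k, by simpa using hk2, rfl⟩
    rcases hpar with hj2 | hj2
    · refine ⟨(Rcoef f (n+1) k/(Lcoef f (n+1) k+Rcoef f (n+1) k)) • x + (Lcoef f (n+1) k+Rcoef f (n+1) k)⁻¹ • (hPhiMem (n+1) k).toLp (Phi f (n+1) k),
        Submodule.add_mem _ (Submodule.smul_mem _ _ hxSp) (Submodule.smul_mem _ _ hΦmem), ?_⟩
      have f1 : ((j:ℝ))/2^(n+1) = lPt (n+1) k := by
        unfold lPt; rw [hj2]; push_cast; ring
      have f2 : ((j:ℝ)+1)/2^(n+1) = mPt (n+1) k := by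
        unfold mPt; rw [hj2]; push_cast; ring
      filter_upwards [hx, Lp.coeFn_add ((Rcoef f (n+1) k/(Lcoef f (n+1) k+Rcoef f (n+1) k)) • x)
          ((Lcoef f (n+1) k+Rcoef f (n+1) k)⁻¹ • (hPhiMem (n+1) k).toLp (Phi f (n+1) k)),
        Lp.coeFn_smul (Rcoef f (n+1) k/(Lcoef f (n+1) k+Rcoef f (n+1) k)) x,
        Lp.coeFn_smul (Lcoef f (n+1) k+Rcoef f (n+1) k)⁻¹ ((hPhiMem (n+1) k).toLp (Phi f (n+1) k)),
        (hPhiMem (n+1) k).coeFn_toLp] with t hxt hadd hs1 hs2 hphit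
      rw [hadd]
      simp only [Pi.add_apply, hs1, hs2, Pi.smul_apply, smul_eq_mul, hphit, hxt, f1, f2]
      rw [Phi, if_neg (Nat.succ_ne_zero n)]
      by_cases h1 : lPt (n+1) k ≤ t ∧ t < mPt (n+1) k
      · rw [if_pos h1, if_pos h1, if_pos ⟨h1.1, h1.2.trans hmr⟩]
        field_simp
        ring
      · rw [if_neg h1, if_neg h1]
        by_cases h2 : mPt (n+1) k ≤ t ∧ t < rPt (n+1) k
        · rw [if_pos h2, if_pos ⟨hlm.le.trans h2.1, h2.2⟩]
          field_simp
          ring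
        · rw [if_neg h2]
          have h3 : ¬(lPt (n+1) k ≤ t ∧ t < rPt (n+1) k) := by
            rintro ⟨ha, hb⟩
            rcases lt_or_ge t (mPt (n+1) k) with h | h
            exacts [h1 ⟨ha, h⟩, h2 ⟨h, hb⟩]
          rw [if_neg h3]
          ring
    · refine ⟨(Lcoef f (n+1) k/(Lcoef f (n+1) k+Rcoef f (n+1) k)) • x - (Lcoef f (n+1) k+Rcoef f (n+1) k)⁻¹ • (hPhiMem (n+1) k).toLp (Phi f (n+1) k),
        Submodule.sub_mem _ (Submodule.smul_mem _ _ hxSp) (Submodule.smul_mem _ _ hΦmem), ?_⟩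
      have f1 : ((j:ℝ))/2^(n+1) = mPt (n+1) k := by
        unfold mPt; rw [hj2]; push_cast; ring
      have f2 : ((j:ℝ)+1)/2^(n+1) = rPt (n+1) k := by
        unfold rPt; rw [hj2]; push_cast; ring
      filter_upwards [hx, Lp.coeFn_sub ((Lcoef f (n+1) k/(Lcoef f (n+1) k+Rcoef f (n+1) k)) • x)
          ((Lcoef f (n+1) k+Rcoef f (n+1) k)⁻¹ • (hPhiMem (n+1) k).toLp (Phi f (n+1) k)),
        Lp.coeFn_smul (Lcoef f (n+1) k/(Lcoef f (n+1) k+Rcoef f (n+1) k)) x,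
        Lp.coeFn_smul (Lcoef f (n+1) k+Rcoef f (n+1) k)⁻¹ ((hPhiMem (n+1) k).toLp (Phi f (n+1) k)),
        (hPhiMem (n+1) k).coeFn_toLp] with t hxt hsub hs1 hs2 hphit
      rw [hsub]
      simp only [Pi.sub_apply, hs1, hs2, Pi.smul_apply, smul_eq_mul, hphit, hxt, f1, f2]
      rw [Phi, if_neg (Nat.succ_ne_zero n)]
      by_cases h1 : lPt (n+1) k ≤ t ∧ t < mPt (n+1) k
      · rw [if_pos h1, if_pos ⟨h1.1, h1.2.trans hmr⟩]
        have h2 : ¬(mPt (n+1) k ≤ t ∧ t < rPt (n+1) k) := fun h => absurd h1.2 h.1.not_gt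
        rw [if_neg h2]
        field_simp
        ring
      · rw [if_neg h1]
        by_cases h2 : mPt (n+1) k ≤ t ∧ t < rPt (n+1) k
        · rw [if_pos h2, if_pos h2, if_pos ⟨hlm.le.trans h2.1, h2.2⟩]
          field_simp
          ring
        · rw [if_neg h2, if_neg h2]
          have h3 : ¬(lPt (n+1) k ≤ t ∧ t < rPt (n+1) k) := by
            rintro ⟨ha, hb⟩
            rcases lt_or_ge t (mPt (n+1) k) with h | h
            exacts [h1 ⟨ha, h⟩, h2 ⟨h, hb⟩]
          rw [if_neg h3]
          ring

lemma coeFn_finsum {α : Type*} {m : MeasurableSpace α} {μ : Measure α} {ι : Type*}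
    (s : Finset ι) (F : ι → Lp ℝ 2 μ) :
    ⇑(∑ i ∈ s, F i) =ᵐ[μ] fun t => ∑ i ∈ s, F i t := by
  induction s using Finset.cons_induction with
  | empty => simp only [Finset.sum_empty]; exact Lp.coeFn_zero ℝ 2 μ
  | cons i s hi ih =>
    rw [Finset.sum_cons]
    filter_upwards [Lp.coeFn_add (F i) (∑ j ∈ s, F j), ih] with t h1 h2
    rw [h1]
    simp only [Pi.add_apply, h2, Finset.sum_cons]

lemma mem_closure_span {f : ℝ → ℝ} (hf : Continuous f)
    (hzero : MeasureTheory.volume {t : ℝ | t ∈ Set.Ioc (0:ℝ) 1 ∧ f t = 0} = 0)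
    (hPhiMem : ∀ n k : ℕ,
      MemLp (Phi f n k) 2 (MeasureTheory.volume.restrict (Set.Ioc (0:ℝ) 1)))
    (ψ : ℝ → ℝ) (hψ : MemLp ψ 2 (MeasureTheory.volume.restrict (Set.Ioc (0:ℝ) 1)))
    (x : Lp ℝ 2 (MeasureTheory.volume.restrict (Set.Ioc (0:ℝ) 1)))
    (hx : (x : ℝ → ℝ) =ᵐ[MeasureTheory.volume.restrict (Set.Ioc (0:ℝ) 1)]
      fun u => f u * ψ u) :
    x ∈ closure (↑(Submodule.span ℝ
        {x : Lp ℝ 2 (MeasureTheory.volume.restrict (Set.Ioc (0:ℝ) 1)) |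
          ∃ n k : ℕ, k < 2 ^ (n - 1) ∧ x = (hPhiMem n k).toLp (Phi f n k)}) :
        Set (Lp ℝ 2 (MeasureTheory.volume.restrict (Set.Ioc (0:ℝ) 1)))) := by
  have hone : (MeasureTheory.volume.restrict (Set.Ioc (0:ℝ) 1)) {(1:ℝ)} = 0 := by
    rw [Measure.restrict_apply (measurableSet_singleton 1)]
    exact measure_mono_null Set.inter_subset_left Real.volume_singleton
  have hμuniv : (MeasureTheory.volume.restrict (Set.Ioc (0:ℝ) 1)) Set.univ = 1 := by
    rw [Measure.restrict_apply_univ, Real.volume_Ioc]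
    norm_num
  obtain ⟨Cb0, hCb0⟩ := (isCompact_Icc (a := (0:ℝ)) (b := 1)).exists_bound_of_continuousOn
    hf.continuousOn
  set Cb := max Cb0 1 with hCbdef
  have hCb : 0 < Cb := lt_of_lt_of_le one_pos (le_max_right _ _)
  have hCbf : ∀ t ∈ Set.Icc (0:ℝ) 1, |f t| ≤ Cb := fun t ht =>
    (hCb0 t ht).trans (le_max_left _ _)
  rw [Metric.mem_closure_iff]
  intro ε hε
  set a := ε / (4 * Cb) with ha
  have ha0 : 0 < a := by positivity
  -- continuous approximation of ψ
  have hψ1 : MemLp (Set.indicator (Set.Ioc (0:ℝ) 1) ψ) 2 volume :=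
    (memLp_indicator_iff_restrict measurableSet_Ioc).mpr hψ
  obtain ⟨g, -, hg_close, hg_cont, -⟩ :=
    hψ1.exists_hasCompactSupport_eLpNorm_sub_le (ε := ENNReal.ofReal a)
      (by norm_num) (by simp [ha0.le, ENNReal.ofReal_eq_zero]; linarith)
  have hψg : eLpNorm (fun t => ψ t - g t) 2 (MeasureTheory.volume.restrict (Set.Ioc (0:ℝ) 1)) ≤ ENNReal.ofReal a := by
    have h1 : (fun t => ψ t - g t) =ᵐ[(MeasureTheory.volume.restrict (Set.Ioc (0:ℝ) 1))]
        (Set.indicator (Set.Ioc (0:ℝ) 1) ψ - g) := by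
      filter_upwards [ae_restrict_mem measurableSet_Ioc] with t ht
      simp [Set.indicator_of_mem ht]
    rw [eLpNorm_congr_ae h1]
    exact (eLpNorm_mono_measure _ Measure.restrict_le_self).trans hg_close
  -- uniform continuity of g on [0,1]
  have huc := (isCompact_Icc (a := (0:ℝ)) (b := 1)).uniformContinuousOn_of_continuous
    hg_cont.continuousOn
  rw [Metric.uniformContinuousOn_iff] at huc
  obtain ⟨δ, hδ0, hδ⟩ := huc a ha0
  obtain ⟨n, hn⟩ := pow_unbounded_of_one_lt (1/δ) (one_lt_two (α := ℝ))
  have hpow : (0:ℝ) < 2 ^ n := by positivity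
  have h2n : (1:ℝ)/2^n < δ := by
    rw [div_lt_iff₀ hpow]
    have := (div_lt_iff₀ hδ0).mp hn
    linarith
  -- the dyadic step function approximating g
  set st : ℝ → ℝ := fun t => ∑ j ∈ Finset.range (2^n), g ((j:ℝ)/2^n) *
    (if (j:ℝ)/2^n ≤ t ∧ t < ((j:ℝ)+1)/2^n then 1 else 0) with hstdef
  have hst_meas : Measurable st := by
    apply Finset.measurable_sum
    intro j _
    apply Measurable.const_mul
    exact Measurable.ite (by exact measurableSet_Ico) measurable_const measurable_const
  have hgst : ∀ᵐ t ∂(MeasureTheory.volume.restrict (Set.Ioc (0:ℝ) 1)), |g t - st t| ≤ a := by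
    filter_upwards [ae_restrict_mem measurableSet_Ioc,
      measure_eq_zero_iff_ae_notMem.mp hone] with t ht hne
    have ht1 : t < 1 := lt_of_le_of_ne ht.2 (by simpa using hne)
    have ht0 : 0 < t := ht.1
    set j := ⌊(2:ℝ)^n * t⌋₊ with hjdef
    have h2nt : (0:ℝ) ≤ 2^n * t := by positivity
    have hjlt : j < 2^n := by
      rw [hjdef, Nat.floor_lt h2nt]
      push_cast
      nlinarith
    have hle : (j:ℝ)/2^n ≤ t := by
      rw [div_le_iff₀ hpow]
      rw [mul_comm]
      exact Nat.floor_le h2nt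
    have hlt : t < ((j:ℝ)+1)/2^n := by
      rw [lt_div_iff₀ hpow]
      have := Nat.lt_floor_add_one ((2:ℝ)^n * t)
      push_cast at this ⊢
      linarith
    have hsum : st t = g ((j:ℝ)/2^n) := by
      simp only [hstdef]
      rw [Finset.sum_eq_single_of_mem j (Finset.mem_range.mpr hjlt)]
      · rw [if_pos ⟨hle, hlt⟩, mul_one]
      · intro j' hj' hne'
        rw [if_neg, mul_zero]
        rintro ⟨ha', hb'⟩
        apply hne'
        have h1' : (j':ℝ) ≤ 2^n * t := by
          rw [div_le_iff₀ hpow] at ha'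
          linarith
        have h2' : (2:ℝ)^n * t < j' + 1 := by
          rw [lt_div_iff₀ hpow] at hb'
          linarith
        rw [hjdef]
        exact ((Nat.floor_eq_iff h2nt).mpr ⟨h1', h2'⟩).symm
    rw [hsum]
    have hmem1 : t ∈ Set.Icc (0:ℝ) 1 := ⟨ht0.le, ht.2⟩
    have hmem2 : (j:ℝ)/2^n ∈ Set.Icc (0:ℝ) 1 := by
      constructor
      · positivity
      · rw [div_le_one hpow]
        exact_mod_cast hjlt.le
    have hdist : dist t ((j:ℝ)/2^n) < δ := by
      rw [Real.dist_eq, abs_of_nonneg (by linarith)]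
      have h1 : t - (j:ℝ)/2^n < 1/2^n := by
        have : ((j:ℝ)+1)/2^n = (j:ℝ)/2^n + 1/2^n := by ring
        rw [this] at hlt
        linarith
      linarith
    have := hδ t hmem1 ((j:ℝ)/2^n) hmem2 hdist
    rw [Real.dist_eq] at this
    exact this.le
  -- L² bound for g - st
  have hgst2 : eLpNorm (fun t => g t - st t) 2 (MeasureTheory.volume.restrict (Set.Ioc (0:ℝ) 1)) ≤ ENNReal.ofReal a := by
    have hb := eLpNorm_le_of_ae_bound (μ := (MeasureTheory.volume.restrict (Set.Ioc (0:ℝ) 1))) (p := 2) (f := fun t => g t - st t) (C := a)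
      (by filter_upwards [hgst] with t ht; rwa [Real.norm_eq_abs])
    rwa [hμuniv, ENNReal.one_rpow, one_mul] at hb
  -- build the span element y
  have hD := dyadic_mem hf hzero hPhiMem n
  classical
  set xx : ℕ → Lp ℝ 2 (MeasureTheory.volume.restrict (Set.Ioc (0:ℝ) 1)) := fun j =>
    if h : j < 2^n then (hD j h).choose else 0 with hxxdef
  have hxxSp : ∀ j < 2^n, xx j ∈ Submodule.span ℝ
      {x : Lp ℝ 2 (MeasureTheory.volume.restrict (Set.Ioc (0:ℝ) 1)) | ∃ n k : ℕ, k < 2 ^ (n - 1) ∧ x = (hPhiMem n k).toLp (Phi f n k)} := by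
    intro j h
    simp only [hxxdef, dif_pos h]
    exact (hD j h).choose_spec.1
  have hxxeq : ∀ j < 2^n, ⇑(xx j) =ᵐ[(MeasureTheory.volume.restrict (Set.Ioc (0:ℝ) 1))]
      fun t => f t * (if (j:ℝ)/2^n ≤ t ∧ t < ((j:ℝ)+1)/2^n then 1 else 0) := by
    intro j h
    simp only [hxxdef, dif_pos h]
    exact (hD j h).choose_spec.2
  set y : Lp ℝ 2 (MeasureTheory.volume.restrict (Set.Ioc (0:ℝ) 1)) := ∑ j ∈ Finset.range (2^n), g ((j:ℝ)/2^n) • xx j with hydef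
  have hySp : y ∈ Submodule.span ℝ
      {x : Lp ℝ 2 (MeasureTheory.volume.restrict (Set.Ioc (0:ℝ) 1)) | ∃ n k : ℕ, k < 2 ^ (n - 1) ∧ x = (hPhiMem n k).toLp (Phi f n k)} :=
    Submodule.sum_mem _ fun j hj =>
      Submodule.smul_mem _ _ (hxxSp j (Finset.mem_range.mp hj))
  have hyeq : ⇑y =ᵐ[(MeasureTheory.volume.restrict (Set.Ioc (0:ℝ) 1))] fun t => f t * st t := by
    have hall : ∀ᵐ t ∂(MeasureTheory.volume.restrict (Set.Ioc (0:ℝ) 1)), ∀ j ∈ Finset.range (2^n),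
        ⇑(xx j) t = f t * (if (j:ℝ)/2^n ≤ t ∧ t < ((j:ℝ)+1)/2^n then 1 else 0) :=
      (ae_ball_iff (Finset.range (2^n) : Finset ℕ).countable_toSet).mpr
        fun j hj => hxxeq j (Finset.mem_range.mp hj)
    have hsmul : ∀ᵐ t ∂(MeasureTheory.volume.restrict (Set.Ioc (0:ℝ) 1)), ∀ j ∈ Finset.range (2^n),
        ⇑(g ((j:ℝ)/2^n) • xx j) t = g ((j:ℝ)/2^n) * ⇑(xx j) t :=
      (ae_ball_iff (Finset.range (2^n) : Finset ℕ).countable_toSet).mpr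
        fun j hj => by
          filter_upwards [Lp.coeFn_smul (g ((j:ℝ)/2^n)) (xx j)] with t h
          simpa using h
    filter_upwards [coeFn_finsum (Finset.range (2^n))
        (fun j => g ((j:ℝ)/2^n) • xx j), hall, hsmul] with t h1 h2 h3
    rw [hydef, h1, hstdef, Finset.mul_sum]
    apply Finset.sum_congr rfl
    intro j hj
    rw [h3 j hj, h2 j hj]
    ring
  -- final estimate
  refine ⟨y, hySp, ?_⟩
  rw [dist_eq_norm, Lp.norm_def]
  have hxy : ⇑(x - y) =ᵐ[(MeasureTheory.volume.restrict (Set.Ioc (0:ℝ) 1))] fun t => f t * (ψ t - st t) := by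
    filter_upwards [Lp.coeFn_sub x y, hx, hyeq] with t h1 h2 h3
    rw [h1, Pi.sub_apply, h2, h3]
    ring
  rw [eLpNorm_congr_ae hxy]
  have step1 : eLpNorm (fun t => f t * (ψ t - st t)) 2 (MeasureTheory.volume.restrict (Set.Ioc (0:ℝ) 1)) ≤
      eLpNorm (fun t => Cb * (ψ t - st t)) 2 (MeasureTheory.volume.restrict (Set.Ioc (0:ℝ) 1)) := by
    apply eLpNorm_mono_ae
    filter_upwards [ae_restrict_mem measurableSet_Ioc] with t ht
    rw [Real.norm_eq_abs, Real.norm_eq_abs, abs_mul, abs_mul]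
    exact mul_le_mul_of_nonneg_right
      ((hCbf t ⟨ht.1.le, ht.2⟩).trans (le_abs_self Cb)) (abs_nonneg _)
  have step2 : eLpNorm (fun t => Cb * (ψ t - st t)) 2 (MeasureTheory.volume.restrict (Set.Ioc (0:ℝ) 1)) =
      (‖Cb‖₊ : ℝ≥0∞) * eLpNorm (fun t => ψ t - st t) 2 (MeasureTheory.volume.restrict (Set.Ioc (0:ℝ) 1)) := by
    rw [← enorm_eq_nnnorm]; exact eLpNorm_const_smul (F := ℝ) Cb (fun t => ψ t - st t) 2 (MeasureTheory.volume.restrict (Set.Ioc (0:ℝ) 1))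
  have step3 : eLpNorm (fun t => ψ t - st t) 2 (MeasureTheory.volume.restrict (Set.Ioc (0:ℝ) 1)) ≤
      ENNReal.ofReal a + ENNReal.ofReal a := by
    have hfeq : (fun t => ψ t - st t) =
        (fun t => ψ t - g t) + fun t => g t - st t := by
      funext t; simp only [Pi.add_apply]; ring
    rw [hfeq]
    refine (eLpNorm_add_le (hψ.aestronglyMeasurable.sub
      hg_cont.aestronglyMeasurable)
      ((hg_cont.measurable.sub hst_meas).aestronglyMeasurable)
      one_le_two).trans ?_
    exact add_le_add hψg hgst2
  have key : eLpNorm (fun t => f t * (ψ t - st t)) 2 (MeasureTheory.volume.restrict (Set.Ioc (0:ℝ) 1)) ≤ ENNReal.ofReal (ε/2) := by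
    refine (step1.trans_eq step2).trans ?_
    calc (‖Cb‖₊ : ℝ≥0∞) * eLpNorm (fun t => ψ t - st t) 2 (MeasureTheory.volume.restrict (Set.Ioc (0:ℝ) 1))
        ≤ ENNReal.ofReal Cb * (ENNReal.ofReal a + ENNReal.ofReal a) := by
          rw [← enorm_eq_nnnorm, Real.enorm_eq_ofReal hCb.le]
          exact mul_le_mul_right step3 _
      _ = ENNReal.ofReal (Cb * (a + a)) := by
          rw [← ENNReal.ofReal_add ha0.le ha0.le, ← ENNReal.ofReal_mul hCb.le]
      _ = ENNReal.ofReal (ε/2) := by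
          congr 1
          rw [ha]
          field_simp
          ring
  calc (eLpNorm (fun t => f t * (ψ t - st t)) 2 (MeasureTheory.volume.restrict (Set.Ioc (0:ℝ) 1))).toReal
      ≤ ε/2 := ENNReal.toReal_le_of_le_ofReal (by positivity) key
    _ < ε := by linarith

/-- if the dyadic mesh tends to `0`, the closed linear span of
the orthonormal family `(Φ_{n,k})` in `L²(0,1)` equals the closure of
`E_f = {f·ψ : ψ ∈ L²(0,1)}`, i.e. `(Φ_{n,k})` is a Hilbert basis of the
closure of `E_f`. -/
theorem closed_span_Phi_eq_closure_Ef
    (f : ℝ → ℝ) (hf : Continuous f)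
    (hzero : MeasureTheory.volume {t : ℝ | t ∈ Set.Ioc (0:ℝ) 1 ∧ f t = 0} = 0)
    (hmesh : ∀ ε > (0:ℝ), ∃ N : ℕ, ∀ n ≥ N, ∀ k < 2 ^ (n - 1),
      rPt n k - lPt n k < ε)
    (hPhiMem : ∀ n k : ℕ,
      MemLp (Phi f n k) 2 (MeasureTheory.volume.restrict (Set.Ioc (0:ℝ) 1))) :
    closure (↑(Submodule.span ℝ
        {x : Lp ℝ 2 (MeasureTheory.volume.restrict (Set.Ioc (0:ℝ) 1)) |
          ∃ n k : ℕ, k < 2 ^ (n - 1) ∧ x = (hPhiMem n k).toLp (Phi f n k)}) :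
        Set (Lp ℝ 2 (MeasureTheory.volume.restrict (Set.Ioc (0:ℝ) 1))))
      = closure {x : Lp ℝ 2 (MeasureTheory.volume.restrict (Set.Ioc (0:ℝ) 1)) |
          ∃ ψ : ℝ → ℝ, MemLp ψ 2 (MeasureTheory.volume.restrict (Set.Ioc (0:ℝ) 1)) ∧
            (x : ℝ → ℝ) =ᵐ[MeasureTheory.volume.restrict (Set.Ioc (0:ℝ) 1)]
              fun u => f u * ψ u} := by
  haveI : IsFiniteMeasure (MeasureTheory.volume.restrict (Set.Ioc (0:ℝ) 1)) := by
    constructor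
    rw [Measure.restrict_apply_univ, Real.volume_Ioc]
    norm_num
  apply Set.Subset.antisymm
  · -- easy direction: every Φ is of the form f·ψ
    set Esub : Submodule ℝ (Lp ℝ 2 (MeasureTheory.volume.restrict (Set.Ioc (0:ℝ) 1))) :=
      { carrier := {x : Lp ℝ 2 (MeasureTheory.volume.restrict (Set.Ioc (0:ℝ) 1)) |
          ∃ ψ : ℝ → ℝ, MemLp ψ 2 (MeasureTheory.volume.restrict (Set.Ioc (0:ℝ) 1)) ∧
            (x : ℝ → ℝ) =ᵐ[MeasureTheory.volume.restrict (Set.Ioc (0:ℝ) 1)]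
              fun u => f u * ψ u}
        zero_mem' := ⟨0, MemLp.zero, by
          filter_upwards [Lp.coeFn_zero ℝ 2 (MeasureTheory.volume.restrict (Set.Ioc (0:ℝ) 1))]
            with t h
          simpa using h⟩
        add_mem' := by
          rintro a b ⟨ψ1, h1, e1⟩ ⟨ψ2, h2, e2⟩
          refine ⟨ψ1 + ψ2, h1.add h2, ?_⟩
          filter_upwards [Lp.coeFn_add a b, e1, e2] with t ha hb hc
          rw [ha, Pi.add_apply, hb, hc, Pi.add_apply]
          ring
        smul_mem' := by
          rintro c a ⟨ψ1, h1, e1⟩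
          refine ⟨c • ψ1, h1.const_smul c, ?_⟩
          filter_upwards [Lp.coeFn_smul c a, e1] with t ha hb
          rw [ha, Pi.smul_apply, hb, Pi.smul_apply, smul_eq_mul, smul_eq_mul]
          ring } with hEsub
    have hSE : {x : Lp ℝ 2 (MeasureTheory.volume.restrict (Set.Ioc (0:ℝ) 1)) |
        ∃ n k : ℕ, k < 2 ^ (n - 1) ∧ x = (hPhiMem n k).toLp (Phi f n k)} ⊆ ↑Esub := by
      rintro x ⟨n, k, hk, rfl⟩
      refine ⟨fun t => if n = 0 then (Real.sqrt (hFun f 1 - hFun f 0))⁻¹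
        else (if lPt n k ≤ t ∧ t < mPt n k then Lcoef f n k
          else if mPt n k ≤ t ∧ t < rPt n k then -(Rcoef f n k) else 0), ?_, ?_⟩
      · by_cases hn : n = 0
        · simp only [hn, if_pos]
          exact memLp_const _
        · simp only [hn, if_false]
          refine MemLp.of_bound ?_ (|Lcoef f n k| + |Rcoef f n k|) ?_
          · refine (Measurable.ite (by exact measurableSet_Ico) measurable_const
              (Measurable.ite (by exact measurableSet_Ico) measurable_const
                measurable_const)).aestronglyMeasurable
          · apply Filter.Eventually.of_forall
            intro t
            rw [Real.norm_eq_abs]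
            by_cases h1 : lPt n k ≤ t ∧ t < mPt n k
            · rw [if_pos h1]
              have := abs_nonneg (Rcoef f n k)
              linarith [le_abs_self (Lcoef f n k), abs_nonneg (Lcoef f n k),
                le_abs_self (|Lcoef f n k|)]
            · rw [if_neg h1]
              by_cases h2 : mPt n k ≤ t ∧ t < rPt n k
              · rw [if_pos h2, abs_neg]
                linarith [abs_nonneg (Lcoef f n k), le_abs_self (|Rcoef f n k|),
                  abs_abs (Rcoef f n k)]
              · rw [if_neg h2]
                simp only [abs_zero]
                positivity
      · filter_upwards [(hPhiMem n k).coeFn_toLp] with t h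
        rw [h, Phi]
        by_cases hn : n = 0
        · rw [if_pos hn, if_pos hn, div_eq_mul_inv]
        · rw [if_neg hn, if_neg hn]
          by_cases h1 : lPt n k ≤ t ∧ t < mPt n k
          · rw [if_pos h1, if_pos h1, mul_comm]
          · rw [if_neg h1, if_neg h1]
            by_cases h2 : mPt n k ≤ t ∧ t < rPt n k
            · rw [if_pos h2, if_pos h2]
              ring
            · rw [if_neg h2, if_neg h2, mul_zero]
    have hspan := Submodule.span_le.mpr hSE
    exact closure_mono hspan
  · apply closure_minimal ?_ isClosed_closure
    rintro x ⟨ψ, hψ, hx⟩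
    exact mem_closure_span hf hzero hPhiMem ψ hψ x hx
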